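/- For SGD with exponential moving average on a scalar noisy quadratic, the expected risk of the averaged iterate satisfies E[ℓ(θ̃(t))] ≤ ((r₁^{t+1} - r₂^{t+1} - γ(1-αh)(r₁^t - r₂^t))/(r₁ - r₂))² E[ℓ(θ(0))] + (αc/(2B(2-αh))) · ((1-γ)(1+(1-αh)γ))/((1+γ)(1-(1-αh)γ)), where r₁ = 1-αh and r₂ = γ. -/

import Mathlib

open MeasureTheory ProbabilityTheory

lemma Sv_le {r γ : ℝ} (hr : |r| < 1) (hγ0 : 0 ≤ γ) (hγ1 : γ < 1) (t : ℕ) :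
    (∑ m ∈ Finset.range t, (r^(m+1) - γ^(m+1))^2)
    ≤ r^2 * (1 - r^2)⁻¹ + γ^2 * (1 - γ^2)⁻¹ - 2 * (r * γ * (1 - r * γ)⁻¹) := by
  have hr2 : |r ^ 2| < 1 := by
    rw [abs_pow]; exact pow_lt_one₀ (abs_nonneg r) hr (by norm_num)
  have hγ2 : |γ ^ 2| < 1 := by
    rw [abs_pow, abs_of_nonneg hγ0]; exact pow_lt_one₀ hγ0 hγ1 (by norm_num)
  have hrγ : |r * γ| < 1 := by
    rw [abs_mul, abs_of_nonneg hγ0]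
    calc |r| * γ ≤ 1 * γ := by nlinarith [abs_nonneg r]
    _ < 1 := by linarith
  have s1 : Summable (fun m : ℕ => (r^2)^(m+1)) := by
    simp_rw [pow_succ]; exact (summable_geometric_of_abs_lt_one hr2).mul_right _
  have s2 : Summable (fun m : ℕ => (γ^2)^(m+1)) := by
    simp_rw [pow_succ]; exact (summable_geometric_of_abs_lt_one hγ2).mul_right _
  have s3 : Summable (fun m : ℕ => (r*γ)^(m+1)) := by
    simp_rw [pow_succ]; exact (summable_geometric_of_abs_lt_one hrγ).mul_right _
  have hg : ∀ m : ℕ, (r^(m+1) - γ^(m+1))^2 = (r^2)^(m+1) + (γ^2)^(m+1) - 2*(r*γ)^(m+1) := by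
    intro m; ring
  have hsum : Summable (fun m : ℕ => (r^(m+1) - γ^(m+1))^2) := by
    simp_rw [hg]; exact (s1.add s2).sub (s3.mul_left 2)
  have hle : (∑ m ∈ Finset.range t, (r^(m+1) - γ^(m+1))^2)
      ≤ ∑' m : ℕ, (r^(m+1) - γ^(m+1))^2 :=
    hsum.sum_le_tsum (Finset.range t) (fun i _ => sq_nonneg _)
  refine hle.trans (le_of_eq ?_)
  have tg : ∀ x : ℝ, |x| < 1 → ∑' m : ℕ, x^(m+1) = x * (1-x)⁻¹ := by
    intro x hx
    simp_rw [pow_succ']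
    rw [tsum_mul_left, tsum_geometric_of_abs_lt_one hx]
  calc ∑' m : ℕ, (r^(m+1) - γ^(m+1))^2
      = ∑' m : ℕ, ((r^2)^(m+1) + (γ^2)^(m+1) - 2*(r*γ)^(m+1)) := by simp_rw [hg]
    _ = (∑' m : ℕ, ((r^2)^(m+1) + (γ^2)^(m+1))) - ∑' m : ℕ, 2*(r*γ)^(m+1) :=
        Summable.tsum_sub (s1.add s2) (s3.mul_left 2)
    _ = (∑' m : ℕ, (r^2)^(m+1)) + (∑' m : ℕ, (γ^2)^(m+1)) - 2 * ∑' m : ℕ, (r*γ)^(m+1) := by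
        rw [Summable.tsum_add s1 s2, tsum_mul_left]
    _ = r^2 * (1 - r^2)⁻¹ + γ^2 * (1 - γ^2)⁻¹ - 2 * (r * γ * (1 - r * γ)⁻¹) := by
        rw [tg _ hr2, tg _ hγ2, tg _ hrγ]


lemma bb_succ (r γ : ℝ) (hne : r ≠ γ) (t : ℕ) :
    (r^(t+1+1) - γ^(t+1+1) - γ*r*(r^(t+1) - γ^(t+1)))/(r-γ)
    = γ * ((r^(t+1) - γ^(t+1) - γ*r*(r^t - γ^t))/(r-γ)) + (1-γ)*r^(t+1) := by
  have hd : r - γ ≠ 0 := sub_ne_zero.mpr hne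
  field_simp
  ring

lemma bb_zero (r γ : ℝ) (hne : r ≠ γ) :
    (r^(0+1) - γ^(0+1) - γ*r*(r^0 - γ^0))/(r-γ) = 1 := by
  have hd : r - γ ≠ 0 := sub_ne_zero.mpr hne
  field_simp
  ring

lemma const_id (α h c B γ : ℝ) (hα : 0 < α) (hh : 0 < h) (hc : 0 < c) (hB : 0 < B)
    (h0 : 0 < α*h) (h2 : α*h < 2) (hγ0 : 0 ≤ γ) (hγ1 : γ < 1) (hne : (1-α*h) - γ ≠ 0) :
    (1/2)*h*(α^2*c/B)*((1-γ)/((1-α*h)-γ))^2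
      * ((1-α*h)^2*(1-(1-α*h)^2)⁻¹ + γ^2*(1-γ^2)⁻¹ - 2*((1-α*h)*γ*(1-(1-α*h)*γ)⁻¹))
    = (α*c/(2*B*(2-α*h))) * ((1-γ)*(1+(1-α*h)*γ)/((1+γ)*(1-(1-α*h)*γ))) := by
  have e1 : 1 - (1-α*h)^2 ≠ 0 := by nlinarith
  have e2 : 1 - γ^2 ≠ 0 := by nlinarith
  have e3 : 1 - (1-α*h)*γ ≠ 0 := by nlinarith
  have e5 : 1 + γ ≠ 0 := by nlinarith
  have e6 : 2 - α*h ≠ 0 := by nlinarith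
  have eB : B ≠ 0 := ne_of_gt hB
  have e1' : 1 - (1 - h*α)^2 ≠ 0 := by rw [mul_comm]; exact e1
  have e3' : 1 - γ*(1 - h*α) ≠ 0 := by rw [mul_comm h, mul_comm γ]; exact e3
  have hne' : 1 - h*α - γ ≠ 0 := by rw [mul_comm]; exact hne
  have e6' : 2 - h*α ≠ 0 := by rw [mul_comm]; exact e6
  field_simp
  ring

lemma l2mul {Ω : Type*} [MeasurableSpace Ω] {μ : Measure Ω} {f g : Ω → ℝ}
    (hf : MemLp f 2 μ) (hg : MemLp g 2 μ) : Integrable (fun ω => f ω * g ω) μ := by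
  have hb : Integrable (fun ω => ((f ω) ^ 2 + (g ω) ^ 2) / 2) μ :=
    (hf.integrable_sq.add hg.integrable_sq).div_const 2
  refine hb.mono' (hf.aestronglyMeasurable.mul hg.aestronglyMeasurable) ?_
  filter_upwards with ω
  rw [Real.norm_eq_abs, abs_mul]
  nlinarith [sq_nonneg (|f ω| - |g ω|), sq_abs (f ω), sq_abs (g ω), abs_nonneg (f ω), abs_nonneg (g ω)]

lemma key_integral {Ω : Type*} [MeasurableSpace Ω] {μ : Measure Ω} [IsProbabilityMeasure μ]
    {X Y E : Ω → ℝ} (hX2 : MemLp X 2 μ) (hY2 : MemLp Y 2 μ) (hE2 : MemLp E 2 μ)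
    (hmean : ∫ ω, E ω ∂μ = 0) (hm2 : ∫ ω, (E ω) ^ 2 ∂μ = 1)
    (hXind : IndepFun X E μ) (hYind : IndepFun Y E μ) (a b : ℝ) :
    ∫ ω, (X ω - a * E ω) * (Y ω - b * E ω) ∂μ = (∫ ω, X ω * Y ω ∂μ) + a * b := by
  have iXY : Integrable (fun ω => X ω * Y ω) μ := l2mul hX2 hY2
  have iXE : Integrable (fun ω => X ω * E ω) μ := l2mul hX2 hE2
  have iYE : Integrable (fun ω => Y ω * E ω) μ := l2mul hY2 hE2
  have iEE : Integrable (fun ω => E ω * E ω) μ := l2mul hE2 hE2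
  have h1 : ∫ ω, X ω * E ω ∂μ = 0 := by
    rw [show (fun ω => X ω * E ω) = X * E from rfl,
      hXind.integral_mul_eq_mul_integral hX2.aestronglyMeasurable hE2.aestronglyMeasurable, hmean, mul_zero]
  have h2 : ∫ ω, Y ω * E ω ∂μ = 0 := by
    rw [show (fun ω => Y ω * E ω) = Y * E from rfl,
      hYind.integral_mul_eq_mul_integral hY2.aestronglyMeasurable hE2.aestronglyMeasurable, hmean, mul_zero]
  have h3 : ∫ ω, E ω * E ω ∂μ = 1 := by
    rw [show (fun ω => E ω * E ω) = fun ω => (E ω) ^ 2 from funext fun ω => by ring, hm2]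
  have expand : (fun ω => (X ω - a * E ω) * (Y ω - b * E ω))
      = fun ω => (X ω * Y ω - (b * (X ω * E ω) + a * (Y ω * E ω))) + (a * b) * (E ω * E ω) :=
    funext fun ω => by ring
  have i5 : Integrable (fun ω => b * (X ω * E ω) + a * (Y ω * E ω)) μ := by
    exact (iXE.const_mul b).add (iYE.const_mul a)
  have i6 : Integrable (fun ω => X ω * Y ω - (b * (X ω * E ω) + a * (Y ω * E ω))) μ := by
    exact iXY.sub i5
  have i7 : Integrable (fun ω => a * b * (E ω * E ω)) μ := by exact iEE.const_mul (a * b)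
  rw [expand, integral_add i6 i7, integral_sub iXY i5,
    integral_add (iXE.const_mul b) (iYE.const_mul a),
    integral_const_mul, integral_const_mul, integral_const_mul, h1, h2, h3]
  ring

lemma Sp_succ (r : ℝ) (t : ℕ) : (∑ j ∈ Finset.range (t+1), (r^2)^j)
    = r^2 * (∑ j ∈ Finset.range t, (r^2)^j) + 1 := by
  rw [Finset.sum_range_succ', Finset.sum_congr rfl
    (fun j _ => show (r^2)^(j+1) = r^2 * (r^2)^j from by ring), ← Finset.mul_sum]
  simp

lemma Sq_succ (r γ : ℝ) (t : ℕ) :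
    (∑ m ∈ Finset.range (t+1), r^m * (r^(m+1) - γ^(m+1)))
    = r * γ * (∑ m ∈ Finset.range t, r^m * (r^(m+1) - γ^(m+1)))
      + (r - γ) * (r^2 * (∑ j ∈ Finset.range t, (r^2)^j) + 1) := by
  rw [Finset.sum_range_succ', Finset.sum_congr rfl
    (fun m _ => show r^(m+1) * (r^(m+1+1) - γ^(m+1+1))
      = r * γ * (r^m * (r^(m+1) - γ^(m+1))) + (r-γ) * r^2 * (r^2)^m from by ring),
    Finset.sum_add_distrib, ← Finset.mul_sum, ← Finset.mul_sum]
  simp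
  ring

lemma Sv_succ (r γ : ℝ) (t : ℕ) :
    (∑ m ∈ Finset.range (t+1), (r^(m+1) - γ^(m+1))^2)
    = γ^2 * (∑ m ∈ Finset.range t, (r^(m+1) - γ^(m+1))^2)
      + 2 * γ * r * (r - γ) * (∑ m ∈ Finset.range t, r^m * (r^(m+1) - γ^(m+1)))
      + r^2 * (r - γ)^2 * (∑ j ∈ Finset.range t, (r^2)^j) + (r - γ)^2 := by
  rw [Finset.sum_range_succ', Finset.sum_congr rfl
    (fun m _ => show (r^(m+1+1) - γ^(m+1+1))^2
      = γ^2 * ((r^(m+1) - γ^(m+1))^2) + 2*γ*r*(r-γ) * (r^m * (r^(m+1) - γ^(m+1)))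
        + r^2*(r-γ)^2 * (r^2)^m from by ring),
    Finset.sum_add_distrib, Finset.sum_add_distrib, ← Finset.mul_sum, ← Finset.mul_sum, ← Finset.mul_sum]
  simp

lemma moments {Ω : Type*} [MeasurableSpace Ω] {μ : Measure Ω} [IsProbabilityMeasure μ]
    (r s γ : ℝ) (hne : r ≠ γ)
    (θ θavg ε : ℕ → Ω → ℝ)
    (hθL2 : ∀ t, MemLp (θ t) 2 μ) (havgL2 : ∀ t, MemLp (θavg t) 2 μ)
    (hεL2 : ∀ t, MemLp (ε t) 2 μ)
    (hmean : ∀ t, ∫ ω, ε t ω ∂μ = 0) (hm2 : ∀ t, ∫ ω, (ε t ω)^2 ∂μ = 1)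
    (hindep : ∀ t, IndepFun (fun ω => (θ t ω, θavg t ω)) (ε t) μ)
    (havg0 : ∀ ω, θavg 0 ω = θ 0 ω)
    (hrecθ : ∀ t ω, θ (t+1) ω = r * θ t ω - s * ε t ω)
    (hrecavg : ∀ t ω, θavg (t+1) ω = γ * θavg t ω + (1-γ) * (r * θ t ω - s * ε t ω))
    (n : ℕ) :
    ∫ ω, (θavg n ω)^2 ∂μ
      = ((r^(n+1) - γ^(n+1) - γ*r*(r^n - γ^n))/(r-γ))^2 * (∫ ω, (θ 0 ω)^2 ∂μ)
        + s^2 * ((1-γ)/(r-γ))^2 * ∑ m ∈ Finset.range n, (r^(m+1) - γ^(m+1))^2 := by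
  have H : ∀ n : ℕ,
      (∫ ω, (θ n ω)^2 ∂μ
        = r^(2*n) * (∫ ω, (θ 0 ω)^2 ∂μ) + s^2 * ∑ j ∈ Finset.range n, (r^2)^j)
      ∧ (∫ ω, θ n ω * θavg n ω ∂μ
        = r^n * ((r^(n+1) - γ^(n+1) - γ*r*(r^n - γ^n))/(r-γ)) * (∫ ω, (θ 0 ω)^2 ∂μ)
          + s^2 * ((1-γ)/(r-γ)) * ∑ m ∈ Finset.range n, r^m * (r^(m+1) - γ^(m+1)))
      ∧ (∫ ω, (θavg n ω)^2 ∂μ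
        = ((r^(n+1) - γ^(n+1) - γ*r*(r^n - γ^n))/(r-γ))^2 * (∫ ω, (θ 0 ω)^2 ∂μ)
          + s^2 * ((1-γ)/(r-γ))^2 * ∑ m ∈ Finset.range n, (r^(m+1) - γ^(m+1))^2) := by
    intro n
    induction n with
    | zero =>
      refine ⟨by simp, ?_, ?_⟩
      · rw [bb_zero r γ hne]
        simp only [Finset.range_zero, Finset.sum_empty, mul_zero, add_zero, pow_zero, one_mul,
          mul_one]
        rw [show (fun ω => θ 0 ω * θavg 0 ω) = fun ω => (θ 0 ω)^2 from
          funext fun ω => by rw [havg0 ω]; ring]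
      · rw [bb_zero r γ hne]
        simp only [Finset.range_zero, Finset.sum_empty, mul_zero, add_zero, one_pow, one_mul]
        rw [show (fun ω => (θavg 0 ω)^2) = fun ω => (θ 0 ω)^2 from
          funext fun ω => by rw [havg0 ω]]
    | succ n ih =>
      obtain ⟨hP, hQ, hR⟩ := ih
      have iP : Integrable (fun ω => (θ n ω)^2) μ := (hθL2 n).integrable_sq
      have iQ : Integrable (fun ω => θ n ω * θavg n ω) μ := l2mul (hθL2 n) (havgL2 n)
      have iR : Integrable (fun ω => (θavg n ω)^2) μ := (havgL2 n).integrable_sq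
      have hX2 : MemLp (fun ω => r * θ n ω) 2 μ := (hθL2 n).const_mul r
      have hY2 : MemLp (fun ω => γ * θavg n ω + (1-γ)*r * θ n ω) 2 μ := by
        exact ((havgL2 n).const_mul γ).add ((hθL2 n).const_mul ((1-γ)*r))
      have indX : IndepFun (fun ω => r * θ n ω) (ε n) μ := by
        exact (hindep n).comp (measurable_fst.const_mul r) measurable_id
      have indY : IndepFun (fun ω => γ * θavg n ω + (1-γ)*r * θ n ω) (ε n) μ := by
        exact (hindep n).comp
          ((measurable_snd.const_mul γ).add (measurable_fst.const_mul ((1-γ)*r))) measurable_id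
      -- the three one-step moment recursions
      have e1 : ∫ ω, (θ (n+1) ω)^2 ∂μ = r^2 * (∫ ω, (θ n ω)^2 ∂μ) + s * s := by
        rw [show (fun ω => (θ (n+1) ω)^2)
            = fun ω => ((fun ω => r * θ n ω) ω - s * ε n ω) * ((fun ω => r * θ n ω) ω - s * ε n ω)
            from funext fun ω => by simp only; rw [hrecθ n ω]; ring]
        rw [key_integral hX2 hX2 (hεL2 n) (hmean n) (hm2 n) indX indX s s]
        rw [show (fun ω => (fun ω => r * θ n ω) ω * (fun ω => r * θ n ω) ω)
            = fun ω => r^2 * (θ n ω)^2 from funext fun ω => by simp only; ring]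
        rw [integral_const_mul]
      have e2 : ∫ ω, θ (n+1) ω * θavg (n+1) ω ∂μ
          = r*γ * (∫ ω, θ n ω * θavg n ω ∂μ) + (1-γ)*r^2 * (∫ ω, (θ n ω)^2 ∂μ)
            + s * ((1-γ)*s) := by
        rw [show (fun ω => θ (n+1) ω * θavg (n+1) ω)
            = fun ω => ((fun ω => r * θ n ω) ω - s * ε n ω)
              * ((fun ω => γ * θavg n ω + (1-γ)*r * θ n ω) ω - ((1-γ)*s) * ε n ω)
            from funext fun ω => by simp only; rw [hrecavg n ω, hrecθ n ω]; ring]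
        rw [key_integral hX2 hY2 (hεL2 n) (hmean n) (hm2 n) indX indY s ((1-γ)*s)]
        rw [show (fun ω => (fun ω => r * θ n ω) ω * (fun ω => γ * θavg n ω + (1-γ)*r * θ n ω) ω)
            = fun ω => r*γ * (θ n ω * θavg n ω) + (1-γ)*r^2 * ((θ n ω)^2)
            from funext fun ω => by simp only; ring]
        rw [integral_add (iQ.const_mul (r*γ)) (iP.const_mul ((1-γ)*r^2)),
          integral_const_mul, integral_const_mul]
      have e3 : ∫ ω, (θavg (n+1) ω)^2 ∂μ
          = γ^2 * (∫ ω, (θavg n ω)^2 ∂μ) + 2*γ*(1-γ)*r * (∫ ω, θ n ω * θavg n ω ∂μ)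
            + (1-γ)^2*r^2 * (∫ ω, (θ n ω)^2 ∂μ) + ((1-γ)*s) * ((1-γ)*s) := by
        rw [show (fun ω => (θavg (n+1) ω)^2)
            = fun ω => ((fun ω => γ * θavg n ω + (1-γ)*r * θ n ω) ω - ((1-γ)*s) * ε n ω)
              * ((fun ω => γ * θavg n ω + (1-γ)*r * θ n ω) ω - ((1-γ)*s) * ε n ω)
            from funext fun ω => by simp only; rw [hrecavg n ω]; ring]
        rw [key_integral hY2 hY2 (hεL2 n) (hmean n) (hm2 n) indY indY ((1-γ)*s) ((1-γ)*s)]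
        rw [show (fun ω => (fun ω => γ * θavg n ω + (1-γ)*r * θ n ω) ω
              * (fun ω => γ * θavg n ω + (1-γ)*r * θ n ω) ω)
            = fun ω => γ^2 * ((θavg n ω)^2) + 2*γ*(1-γ)*r * (θ n ω * θavg n ω)
                + (1-γ)^2*r^2 * ((θ n ω)^2)
            from funext fun ω => by simp only; ring]
        have iA : Integrable (fun ω => γ^2 * ((θavg n ω)^2)
            + 2*γ*(1-γ)*r * (θ n ω * θavg n ω)) μ := by
          exact (iR.const_mul (γ^2)).add (iQ.const_mul (2*γ*(1-γ)*r))
        rw [integral_add iA (iP.const_mul ((1-γ)^2*r^2)),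
          integral_add (iR.const_mul (γ^2)) (iQ.const_mul (2*γ*(1-γ)*r)),
          integral_const_mul, integral_const_mul, integral_const_mul]
      have hd : r - γ ≠ 0 := sub_ne_zero.mpr hne
      refine ⟨?_, ?_, ?_⟩
      · rw [e1, hP, Sp_succ]
        ring
      · rw [e2, hP, hQ, Sq_succ, bb_succ r γ hne n]
        field_simp
        ring
      · rw [e3, hP, hQ, hR, Sv_succ, bb_succ r γ hne n]
        field_simp
        ring
  exact (H n).2.2

/-- For SGD with exponential moving average on a scalar noisy quadratic
(`θ(t+1) = θ(t) - α(hθ(t) + √(c/B)ε(t))`, `θ̃(t+1) = γθ̃(t) + (1-γ)θ(t+1)`, `θ̃(0) = θ(0)`),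
with `0 < αh < 2`, `0 ≤ γ < 1`, `γ ≠ 1-αh`, the expected risk of the averaged iterate
satisfies, with `r₁ = 1-αh` and `r₂ = γ`:
`E[ℓ(θ̃(t))] ≤ ((r₁^(t+1) - r₂^(t+1) - γ(1-αh)(r₁^t - r₂^t))/(r₁-r₂))² E[ℓ(θ(0))]
  + (αc/(2B(2-αh)))·((1-γ)(1+(1-αh)γ))/((1+γ)(1-(1-αh)γ))`. -/
theorem stmt12 {Ω : Type*} [MeasurableSpace Ω] {μ : Measure Ω} [IsProbabilityMeasure μ]
    (α h c B γ : ℝ) (hα : 0 < α) (hh : 0 < h) (hc : 0 < c) (hB : 0 < B)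
    (h0 : 0 < α * h) (h2 : α * h < 2) (hγ0 : 0 ≤ γ) (hγ1 : γ < 1)
    (hγne : γ ≠ 1 - α * h)
    (θ θavg ε : ℕ → Ω → ℝ)
    (hθmeas : ∀ t, Measurable (θ t)) (havgmeas : ∀ t, Measurable (θavg t))
    (hεmeas : ∀ t, Measurable (ε t))
    (hθL2 : ∀ t, MemLp (θ t) 2 μ) (havgL2 : ∀ t, MemLp (θavg t) 2 μ)
    (hεL2 : ∀ t, MemLp (ε t) 2 μ)
    (hmean : ∀ t, ∫ ω, ε t ω ∂μ = 0) (hvar : ∀ t, variance (ε t) μ = 1)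
    (hindep : ∀ t, IndepFun (fun ω => (θ t ω, θavg t ω)) (ε t) μ)
    (havg0 : ∀ ω, θavg 0 ω = θ 0 ω)
    (hrecθ : ∀ t ω, θ (t + 1) ω = θ t ω - α * (h * θ t ω + Real.sqrt (c / B) * ε t ω))
    (hrecavg : ∀ t ω, θavg (t + 1) ω = γ * θavg t ω + (1 - γ) * θ (t + 1) ω)
    (t : ℕ) :
    ∫ ω, (1 / 2) * h * (θavg t ω) ^ 2 ∂μ
      ≤ (((1 - α * h) ^ (t + 1) - γ ^ (t + 1)
            - γ * (1 - α * h) * ((1 - α * h) ^ t - γ ^ t)) / ((1 - α * h) - γ)) ^ 2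
          * ∫ ω, (1 / 2) * h * (θ 0 ω) ^ 2 ∂μ
        + (α * c / (2 * B * (2 - α * h)))
          * ((1 - γ) * (1 + (1 - α * h) * γ) / ((1 + γ) * (1 - (1 - α * h) * γ))) := by
  have hrne : (1 - α * h) ≠ γ := fun hh' => hγne hh'.symm
  have hd : (1 - α * h) - γ ≠ 0 := sub_ne_zero.mpr hrne
  have habs : |1 - α * h| < 1 := abs_lt.mpr ⟨by linarith, by linarith⟩
  have hcB : (0:ℝ) ≤ c / B := le_of_lt (div_pos hc hB)
  have hs2 : (α * Real.sqrt (c / B)) ^ 2 = α ^ 2 * c / B := by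
    rw [mul_pow, Real.sq_sqrt hcB]; ring
  have hm2 : ∀ n, ∫ ω, (ε n ω) ^ 2 ∂μ = 1 := by
    intro n
    have hv := variance_eq_sub (hεL2 n)
    rw [hvar n, hmean n] at hv
    have h9 : μ[(ε n) ^ 2] = ∫ ω, (ε n ω) ^ 2 ∂μ := rfl
    rw [h9] at hv
    linarith
  have hmom := moments (1 - α * h) (α * Real.sqrt (c / B)) γ hrne θ θavg ε
    hθL2 havgL2 hεL2 hmean hm2 hindep havg0
    (fun n ω => by rw [hrecθ n ω]; ring)
    (fun n ω => by rw [hrecavg n ω, hrecθ n ω]; ring) t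
  have hSv := Sv_le habs hγ0 hγ1 t
  have hL : ∫ ω, (1 / 2) * h * (θavg t ω) ^ 2 ∂μ = 1 / 2 * h * ∫ ω, (θavg t ω) ^ 2 ∂μ :=
    integral_const_mul _ _
  have hR0 : ∫ ω, (1 / 2) * h * (θ 0 ω) ^ 2 ∂μ = 1 / 2 * h * ∫ ω, (θ 0 ω) ^ 2 ∂μ :=
    integral_const_mul _ _
  rw [hL, hR0, hmom, hs2]
  have hcoef : (0:ℝ) ≤ 1 / 2 * h * (α ^ 2 * c / B * ((1 - γ) / ((1 - α * h) - γ)) ^ 2) := by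
    positivity
  have hbound : 1 / 2 * h * (α ^ 2 * c / B * ((1 - γ) / ((1 - α * h) - γ)) ^ 2)
        * (∑ m ∈ Finset.range t, ((1 - α * h) ^ (m + 1) - γ ^ (m + 1)) ^ 2)
      ≤ 1 / 2 * h * (α ^ 2 * c / B * ((1 - γ) / ((1 - α * h) - γ)) ^ 2)
        * ((1 - α * h) ^ 2 * (1 - (1 - α * h) ^ 2)⁻¹ + γ ^ 2 * (1 - γ ^ 2)⁻¹
            - 2 * ((1 - α * h) * γ * (1 - (1 - α * h) * γ)⁻¹)) :=
    mul_le_mul_of_nonneg_left hSv hcoef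
  have hconst := const_id α h c B γ hα hh hc hB h0 h2 hγ0 hγ1 hd
  nlinarith [hbound, hconst]
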